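/- Let b > 1, N > 1 with gcd(N,b)=1 and let d > 1 divide ord_N(b), with k = ord_N(b)/d. Suppose for every prime p dividing gcd(b^k − 1, N) one has ν_p(N) ≤ ν_p(d). If x ≡ b·y (mod N) for units x, y mod N, then S_d(x) ≡ S_d(y) mod (b^k − 1) is automatic; in particular, it suffices to verify the Midy divisibility (b^k − 1) | S_d(x) for one representative x of each cyclotomic coset of b acting on units mod N. -/

import Mathlib

/-- Sum of the `d` blocks of length `k` of the base-`b` period of `x/N`. -/
def midySum (b N k d x : ℕ) : ℕ :=
  ∑ j ∈ Finset.Icc 1 d, (x * b ^ (j * k) / N) % b ^ k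

/-- Geometric sum identity in `ℕ`. -/
lemma geom_nat (a d : ℕ) (ha : 1 ≤ a) :
    (a - 1) * ∑ i ∈ Finset.range d, a ^ i = a ^ d - 1 := by
  induction d with
  | zero => simp
  | succ n ih =>
    have h1 : 1 ≤ a ^ n := Nat.one_le_pow _ _ (by omega)
    have h2 : a ^ n ≤ a ^ (n + 1) := Nat.pow_le_pow_right (by omega) (by omega)
    have h3 : (a - 1) * a ^ n = a ^ (n + 1) - a ^ n := by
      rw [Nat.sub_one_mul, pow_succ, mul_comm (a ^ n) a]
    rw [Finset.sum_range_succ, Nat.mul_add, ih, h3]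
    omega

/-- One digit-block extraction step. -/
lemma block_eq (N m a : ℕ) (hN : 0 < N) :
    N * ((a * m / N) % m) + (a * m) % N = m * (a % N) := by
  rcases Nat.eq_zero_or_pos m with rfl | hm
  · simp
  have hr : a % N < N := Nat.mod_lt _ hN
  have hdivlt : a % N * m / N < m := by
    apply Nat.div_lt_of_lt_mul
    exact (Nat.mul_lt_mul_right hm).mpr hr
  have key : a * m = N * (a / N * m) + a % N * m := by
    conv_lhs => rw [← Nat.div_add_mod a N]
    ring
  have hdiv : a * m / N = a / N * m + a % N * m / N := by
    rw [key, Nat.mul_add_div hN]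
  have hmod : (a * m) % N = a % N * m % N := by
    rw [key, Nat.mul_add_mod]
  rw [hdiv, hmod, add_comm (a / N * m), Nat.add_mul_mod_self_right,
    Nat.mod_eq_of_lt hdivlt, Nat.div_add_mod, mul_comm]

/-- The key arithmetic lemma: under the Midy valuation hypothesis, `N` divides
the geometric sum `∑_{i<d} (b^k)^i`. -/
lemma key_dvd (b N d k : ℕ) (hb : 1 < b) (hN : 1 < N) (hco : Nat.Coprime N b)
    (hd : 0 < d) (hk : 0 < k) (hdvd : N ∣ b ^ (k * d) - 1)
    (hval : ∀ p, p.Prime → p ∣ Nat.gcd (b ^ k - 1) N →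
      padicValNat p N ≤ padicValNat p d) :
    N ∣ ∑ i ∈ Finset.range d, (b ^ k) ^ i := by
  set a := b ^ k with ha
  set C := ∑ i ∈ Finset.range d, a ^ i with hC
  have ha2 : 2 ≤ a := Nat.one_lt_pow hk.ne' hb
  have geom : (a - 1) * C = a ^ d - 1 := geom_nat a d (by omega)
  have had1 : 1 < a ^ d := Nat.one_lt_pow hd.ne' (by omega)
  have hNad : N ∣ a ^ d - 1 := by rwa [ha, ← pow_mul]
  have hC0 : C ≠ 0 := by
    intro h
    rw [h, mul_zero] at geom
    omega
  rw [← Nat.factorization_le_iff_dvd (by omega) hC0]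
  intro p
  by_cases hp : p.Prime
  · by_cases hpN : p ∣ N
    · haveI : Fact p.Prime := ⟨hp⟩
      have hpb : ¬ p ∣ b := by
        intro h
        have h1 : p ∣ Nat.gcd N b := Nat.dvd_gcd hpN h
        rw [hco] at h1
        have := Nat.le_of_dvd one_pos h1
        have := hp.two_le
        omega
      have hpa : ¬ p ∣ a := fun h => hpb (hp.dvd_of_dvd_pow h)
      by_cases hpa1 : p ∣ a - 1
      · -- LTE case
        have hgcd : p ∣ Nat.gcd (a - 1) N := Nat.dvd_gcd hpa1 hpN
        have hvp : padicValNat p N ≤ padicValNat p d := hval p hp hgcd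
        have ha1ne : a - 1 ≠ 0 := by omega
        have hmul : padicValNat p (a - 1) + padicValNat p C
            = padicValNat p (a ^ d - 1) := by
          rw [← geom, padicValNat.mul ha1ne hC0]
        rw [Nat.factorization_def _ hp, Nat.factorization_def _ hp]
        by_cases hp2 : p = 2
        · subst hp2
          have h1N : 1 ≤ padicValNat 2 N :=
            one_le_padicValNat_of_dvd (by omega) hpN
          have h1d : 1 ≤ padicValNat 2 d := le_trans h1N hvp
          have h2d : (2 : ℕ) ∣ d := dvd_of_one_le_padicValNat h1d
          have hdeven : Even d := (even_iff_two_dvd).mpr h2d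
          have hmain := padicValNat.pow_two_sub_pow (x := a) (y := 1)
            (by omega) (by simpa using hpa1) hpa hd.ne' hdeven
          simp only [one_pow] at hmain
          have h2a1 : (2 : ℕ) ∣ a + 1 := by omega
          have h1a1 : 1 ≤ padicValNat 2 (a + 1) :=
            one_le_padicValNat_of_dvd (by omega) h2a1
          omega
        · have hodd : Odd p := hp.odd_of_ne_two hp2
          have hmain := padicValNat.pow_sub_pow (p := p) hodd (x := a) (y := 1)
            (by omega) (by simpa using hpa1) hpa hd.ne'
          simp only [one_pow] at hmain
          omega
      · -- coprime case
        have h1 : p ^ N.factorization p ∣ N := Nat.ordProj_dvd N p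
        have h2 : p ^ N.factorization p ∣ (a - 1) * C := by
          rw [geom]; exact h1.trans hNad
        have hcop : Nat.Coprime (p ^ N.factorization p) (a - 1) :=
          Nat.Coprime.pow_left _ ((Nat.Prime.coprime_iff_not_dvd hp).mpr hpa1)
        have h3 : p ^ N.factorization p ∣ C := hcop.dvd_of_dvd_mul_left h2
        exact (Nat.Prime.pow_dvd_iff_le_factorization hp hC0).mp h3
    · simp [Nat.factorization_eq_zero_of_not_dvd hpN]
  · simp [Nat.factorization_eq_zero_of_not_prime _ hp]

theorem stmt2 (b N d k : ℕ) (hb : 1 < b) (hN : 1 < N) (hco : Nat.Coprime N b)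
    (hd : 1 < d) (hk : 0 < k) (hord : orderOf (b : ZMod N) = d * k)
    (hval : ∀ p, p.Prime → p ∣ Nat.gcd (b ^ k - 1) N →
      padicValNat p N ≤ padicValNat p d) :
    (∀ x y, 0 < x → x < N → Nat.Coprime x N → 0 < y → y < N → Nat.Coprime y N →
        x ≡ b * y [MOD N] → midySum b N k d x ≡ midySum b N k d y [MOD b ^ k - 1]) ∧
    (∀ R : Finset ℕ,
        (∀ x, 0 < x → x < N → Nat.Coprime x N → ∃ r ∈ R, ∃ i : ℕ, x ≡ b ^ i * r [MOD N]) →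
        (∀ r ∈ R, 0 < r ∧ r < N ∧ Nat.Coprime r N) →
        (∀ r ∈ R, (b ^ k - 1) ∣ midySum b N k d r) →
        ∀ x, 0 < x → x < N → Nat.Coprime x N → (b ^ k - 1) ∣ midySum b N k d x) := by
  have hN0 : 0 < N := by omega
  have hbk : 1 < b ^ k := Nat.one_lt_pow hk.ne' hb
  have hmodu : (b : ZMod N) ^ (d * k) = 1 := by rw [← hord]; exact pow_orderOf_eq_one _
  have hmodeq : b ^ (d * k) ≡ 1 [MOD N] := by
    have h1 : ((b ^ (d * k) : ℕ) : ZMod N) = ((1 : ℕ) : ZMod N) := by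
      push_cast
      rw [hmodu]
    exact (ZMod.natCast_eq_natCast_iff _ _ _).mp h1
  have hdk : N ∣ b ^ (d * k) - 1 :=
    (Nat.modEq_iff_dvd' (Nat.one_le_pow _ _ (by omega))).mp hmodeq.symm
  have main : ∀ x : ℕ, (b ^ k - 1) ∣ midySum b N k d x := by
    intro x
    set r : ℕ → ℕ := fun i => (x * (b ^ k) ^ i) % N with hr
    have hrd : r d = r 0 := by
      show (x * (b ^ k) ^ d) % N = (x * (b ^ k) ^ 0) % N
      rw [pow_zero, ← pow_mul, mul_comm k d]
      exact Nat.ModEq.mul_left x hmodeq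
    have hstep : ∀ i, N * ((x * b ^ ((1 + i) * k) / N) % b ^ k) + r (i + 1)
        = b ^ k * r i := by
      intro i
      have h1 : x * b ^ ((1 + i) * k) = (x * (b ^ k) ^ i) * b ^ k := by
        rw [mul_comm (1 + i) k, pow_mul, add_comm 1 i, pow_succ, mul_assoc]
      have h2 : r (i + 1) = ((x * (b ^ k) ^ i) * b ^ k) % N := by
        show (x * (b ^ k) ^ (i + 1)) % N = _
        rw [pow_succ, mul_assoc]
      rw [h1, h2]
      exact block_eq N (b ^ k) (x * (b ^ k) ^ i) hN0
    have hsum : N * midySum b N k d x + ∑ i ∈ Finset.range d, r (i + 1)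
        = b ^ k * ∑ i ∈ Finset.range d, r i := by
      unfold midySum
      rw [← Finset.Ico_add_one_right_eq_Icc, Finset.sum_Ico_eq_sum_range]
      simp only [Nat.succ_sub_one, Nat.add_sub_cancel]
      rw [Finset.mul_sum, Finset.mul_sum, ← Finset.sum_add_distrib]
      exact Finset.sum_congr rfl fun i _ => hstep i
    have hshift : ∑ i ∈ Finset.range d, r (i + 1) = ∑ i ∈ Finset.range d, r i := by
      have h1 := Finset.sum_range_succ r d
      have h2 := Finset.sum_range_succ' r d
      omega
    rw [hshift] at hsum
    set T := ∑ i ∈ Finset.range d, r i with hT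
    have hNT : N ∣ T := by
      have hCd : N ∣ ∑ i ∈ Finset.range d, (b ^ k) ^ i :=
        key_dvd b N d k hb hN hco (by omega) hk (by rwa [mul_comm k d]) hval
      have h1 : T % N = (x * ∑ i ∈ Finset.range d, (b ^ k) ^ i) % N := by
        rw [hT, hr, Finset.mul_sum]
        exact (Finset.sum_nat_mod _ _ _).symm
      have h2 : (x * ∑ i ∈ Finset.range d, (b ^ k) ^ i) % N = 0 :=
        Nat.mod_eq_zero_of_dvd (hCd.mul_left x)
      exact Nat.dvd_of_mod_eq_zero (h1.trans h2)
    obtain ⟨u, hu⟩ := hNT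
    have hfin : N * midySum b N k d x = N * ((b ^ k - 1) * u) := by
      have h3 : N * midySum b N k d x = b ^ k * T - T := by omega
      rw [h3, hu]
      have h4 : b ^ k * (N * u) - N * u = (b ^ k - 1) * (N * u) := by
        rw [Nat.sub_one_mul]
      rw [h4]; ring
    exact ⟨u, Nat.eq_of_mul_eq_mul_left hN0 hfin⟩
  constructor
  · intro x y _ _ _ _ _ _ _
    exact ((Nat.modEq_zero_iff_dvd).mpr (main x)).trans
      ((Nat.modEq_zero_iff_dvd).mpr (main y)).symm
  · intro R _ _ _ x _ _ _
    exact main x
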